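/- Let G be a nontrivial finite group with trivial solvable radical, let M₁, …, M_r be the distinct minimal normal subgroups of G, suppose each M_i is isomorphic to a direct product of n_i copies of a nonabelian finite simple group T_i, and set k_i = k*(T_i). Then ∏_{i=1}^{r} C(n_i + k_i − 1, k_i − 1) ≤ k(G), where C(a, b) denotes the binomial coefficient a choose b. -/

import Mathlib

/-- The number of conjugacy classes of a group `G`. -/
noncomputable def numConjClasses (G : Type*) [Group G] : ℕ :=
  Nat.card (ConjClasses G)

/-- `k*(T)`: the number of orbits of the natural action of `Aut(T)` on `T`. -/
noncomputable def numAutOrbits (T : Type*) [Group T] : ℕ :=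
  Nat.card (Quotient (MulAction.orbitRel (MulAut T) T))

/-- `N` is a minimal normal subgroup of `G`. -/
def IsMinimalNormal {G : Type*} [Group G] (N : Subgroup G) : Prop :=
  N ≠ ⊥ ∧ N.Normal ∧ ∀ K : Subgroup G, K.Normal → K ≤ N → K ≠ ⊥ → K = N

open Subgroup

namespace PCAux

variable {T : Type*} [Group T] {n : ℕ}

noncomputable def profile (x : Fin n → T) : Multiset (Quotient (MulAction.orbitRel (MulAut T) T)) :=
  Finset.univ.val.map fun j => Quotient.mk (MulAction.orbitRel (MulAut T) T) (x j)

lemma orb_mk_apply (α : MulAut T) (t : T) :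
    Quotient.mk (MulAction.orbitRel (MulAut T) T) (α t)
      = Quotient.mk (MulAction.orbitRel (MulAut T) T) t :=
  Quotient.sound ⟨α, rfl⟩

lemma profile_card (x : Fin n → T) : Multiset.card (profile x) = n := by
  simp [profile]

def coordSub (T : Type*) [Group T] {n : ℕ} (j : Fin n) : Subgroup (Fin n → T) where
  carrier := {y | ∀ k, k ≠ j → y k = 1}
  one_mem' := fun _ _ => rfl
  mul_mem' := by
    intro a b ha hb k hk
    simp only [Pi.mul_apply, ha k hk, hb k hk, one_mul]
  inv_mem' := by
    intro a ha k hk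
    simp only [Pi.inv_apply, ha k hk, inv_one]

lemma mem_coordSub {j : Fin n} {y : Fin n → T} :
    y ∈ coordSub T j ↔ ∀ k, k ≠ j → y k = 1 := Iff.rfl

lemma mulSingle_mem_coordSub (j : Fin n) (t : T) : Pi.mulSingle j t ∈ coordSub T j :=
  fun k hk => by rw [Pi.mulSingle_eq_of_ne hk]

lemma eq_mulSingle_of_mem {j : Fin n} {y : Fin n → T} (hy : y ∈ coordSub T j) :
    y = Pi.mulSingle j (y j) := by
  funext k
  by_cases hk : k = j
  · subst hk; simp
  · rw [Pi.mulSingle_eq_of_ne hk, hy k hk]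

instance coordSub_normal (j : Fin n) : (coordSub T j).Normal := by
  constructor
  intro y hy g k hk
  simp only [Pi.mul_apply, Pi.inv_apply, hy k hk, mul_one, mul_inv_cancel]

lemma card_coordSub (j : Fin n) : Nat.card (coordSub T j) = Nat.card T := by
  refine Nat.card_congr ⟨fun y => y.1 j, fun t => ⟨Pi.mulSingle j t, mulSingle_mem_coordSub j t⟩,
    fun y => ?_, fun t => by simp⟩
  exact Subtype.ext (eq_mulSingle_of_mem y.2).symm

lemma coordSub_ne_bot [Nontrivial T] (j : Fin n) : coordSub T j ≠ ⊥ := by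
  obtain ⟨t0, ht0⟩ := exists_ne (1 : T)
  intro h
  have h1 : Pi.mulSingle j t0 ∈ coordSub T j := mulSingle_mem_coordSub j t0
  rw [h, Subgroup.mem_bot] at h1
  exact ht0 (by simpa using congrFun h1 j)

lemma coordSub_injective [Nontrivial T] : Function.Injective (coordSub T (n := n)) := by
  intro j j' h
  by_contra hne
  obtain ⟨t0, ht0⟩ := exists_ne (1 : T)
  have h1 : Pi.mulSingle j t0 ∈ coordSub T j' := h ▸ mulSingle_mem_coordSub j t0
  have := h1 j hne
  rw [Pi.mulSingle_eq_same] at this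
  exact ht0 this


lemma center_eq_bot (hs : IsSimpleGroup T) (hna : ¬ ∀ a b : T, a * b = b * a) :
    Subgroup.center T = ⊥ := by
  rcases hs.eq_bot_or_eq_top_of_normal (Subgroup.center T) inferInstance with h | h
  · exact h
  · exact absurd (fun a b => by
      have : a ∈ Subgroup.center T := h ▸ Subgroup.mem_top a
      exact (Subgroup.mem_center_iff.mp this b).symm) hna

/-- Every nontrivial normal subgroup of `T^n` contains a coordinate subgroup. -/
lemma exists_coordSub_le (hs : IsSimpleGroup T) (hna : ¬ ∀ a b : T, a * b = b * a)
    (N : Subgroup (Fin n → T)) (hN : N.Normal) (hne : N ≠ ⊥) :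
    ∃ j, coordSub T j ≤ N := by
  classical
  rcases N.bot_or_exists_ne_one with h | ⟨x, hxN, hx1⟩
  · exact absurd h hne
  obtain ⟨j, hxj⟩ : ∃ j, x j ≠ 1 := by
    by_contra h
    push_neg at h
    exact hx1 (funext h)
  -- find a non-commuting element
  have hxc : x j ∉ Subgroup.center T := by
    rw [center_eq_bot hs hna, Subgroup.mem_bot]
    exact hxj
  obtain ⟨t, ht⟩ : ∃ t, ¬ t * x j = x j * t := by
    by_contra h
    push_neg at h
    exact hxc (Subgroup.mem_center_iff.mpr fun g => h g)
  -- the commutator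
  set u : Fin n → T := Pi.mulSingle j t with hu
  have hcN : u * x * u⁻¹ * x⁻¹ ∈ N := mul_mem (hN.conj_mem x hxN u) (inv_mem hxN)
  set w : T := t * x j * t⁻¹ * (x j)⁻¹ with hw
  have hw1 : w ≠ 1 := by
    intro h
    rw [hw, mul_inv_eq_one, mul_inv_eq_iff_eq_mul] at h
    exact ht h
  have hcomm_single : u * x * u⁻¹ * x⁻¹ = Pi.mulSingle j w := by
    funext k
    by_cases hk : k = j
    · subst hk
      simp [hu, hw, Pi.mulSingle_eq_same]
    · simp only [Pi.mul_apply, Pi.inv_apply, hu, Pi.mulSingle_eq_of_ne hk,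
        Pi.mulSingle_eq_of_ne (hk : k ≠ j), one_mul, inv_one, mul_one, mul_inv_cancel]
  -- the comap subgroup is normal and nontrivial, hence everything
  set D : Subgroup T := Subgroup.comap (MonoidHom.mulSingle (fun _ : Fin n => T) j) N with hD
  have hDnormal : D.Normal := by
    constructor
    intro s hsD g
    show MonoidHom.mulSingle (fun _ : Fin n => T) j (g * s * g⁻¹) ∈ N
    rw [map_mul, map_mul, map_inv]
    exact hN.conj_mem _ hsD _
  have hwD : w ∈ D := by
    show MonoidHom.mulSingle (fun _ : Fin n => T) j w ∈ N
    have : MonoidHom.mulSingle (fun _ : Fin n => T) j w = Pi.mulSingle j w := rfl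
    rw [this, ← hcomm_single]
    exact hcN
  have hDtop : D = ⊤ := by
    rcases hs.eq_bot_or_eq_top_of_normal D hDnormal with h | h
    · rw [h, Subgroup.mem_bot] at hwD
      exact absurd hwD hw1
    · exact h
  refine ⟨j, fun y hy => ?_⟩
  have : y = Pi.mulSingle j (y j) := eq_mulSingle_of_mem hy
  rw [this]
  have : y j ∈ D := hDtop ▸ Subgroup.mem_top _
  exact this

lemma centralizer_coordSub (hs : IsSimpleGroup T) (hna : ¬ ∀ a b : T, a * b = b * a)
    (j : Fin n) (y : Fin n → T) :
    y ∈ Subgroup.centralizer (coordSub T j : Set (Fin n → T)) ↔ y j = 1 := by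
  constructor
  · intro hy
    have key : ∀ t : T, t * y j = y j * t := by
      intro t
      have := Subgroup.mem_centralizer_iff.mp hy (Pi.mulSingle j t) (mulSingle_mem_coordSub j t)
      have := congrFun this j
      simpa [Pi.mulSingle_eq_same] using this
    have : y j ∈ Subgroup.center T := Subgroup.mem_center_iff.mpr key
    rwa [center_eq_bot hs hna, Subgroup.mem_bot] at this
  · intro hyj
    rw [Subgroup.mem_centralizer_iff]
    intro c hc
    funext k
    by_cases hk : k = j
    · subst hk
      simp [Pi.mul_apply, hyj]
    · simp [Pi.mul_apply, (hc k hk : c k = 1)]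

lemma profile_mulEquiv [Finite T] (hs : IsSimpleGroup T) (hna : ¬ ∀ a b : T, a * b = b * a)
    (f : (Fin n → T) ≃* (Fin n → T)) (x : Fin n → T) :
    profile (f x) = profile x := by
  classical
  haveI : Nontrivial T := hs.toNontrivial
  -- f permutes the coordinate subgroups
  have hmap : ∀ j : Fin n, ∃ k, Subgroup.map f.toMonoidHom (coordSub T j) = coordSub T k := by
    intro j
    have hnormal : (Subgroup.map f.toMonoidHom (coordSub T j)).Normal :=
      Subgroup.Normal.map (coordSub_normal j) f.toMonoidHom f.surjective
    have hnebot : Subgroup.map f.toMonoidHom (coordSub T j) ≠ ⊥ := by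
      intro h
      rw [Subgroup.map_eq_bot_iff] at h
      have hker : f.toMonoidHom.ker = ⊥ := (MonoidHom.ker_eq_bot_iff _).mpr f.injective
      exact coordSub_ne_bot j (le_bot_iff.mp (hker ▸ h))
    obtain ⟨k, hk⟩ := exists_coordSub_le hs hna _ hnormal hnebot
    have h1 : Nat.card (Subgroup.map f.toMonoidHom (coordSub T j)) = Nat.card T := by
      rw [← card_coordSub (T := T) (n := n) j]
      exact (Nat.card_congr
        ((coordSub T j).equivMapOfInjective f.toMonoidHom f.injective).toEquiv).symm
    have hcard : Nat.card (Subgroup.map f.toMonoidHom (coordSub T j))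
        ≤ Nat.card (coordSub T k) := by rw [h1, card_coordSub]
    exact ⟨k, (Subgroup.eq_of_le_of_card_ge hk hcard).symm⟩
  choose σ hσ using hmap
  have hσinj : Function.Injective σ := by
    intro j j' h
    apply coordSub_injective (T := T) (n := n)
    apply Subgroup.map_injective (f := f.toMonoidHom) (by exact f.injective)
    rw [hσ j, hσ j', h]
  let σe : Equiv.Perm (Fin n) := Equiv.ofBijective σ (Finite.injective_iff_bijective.mp hσinj)
  -- coordinate formula
  have hcoord : ∀ (x : Fin n → T) (j : Fin n),
      f x (σ j) = f (Pi.mulSingle j (x j)) (σ j) := by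
    intro x j
    have hyj : (((Pi.mulSingle j (x j))⁻¹ * x : Fin n → T)) j = 1 := by simp
    have hyc : (Pi.mulSingle j (x j))⁻¹ * x
        ∈ Subgroup.centralizer (coordSub T j : Set (Fin n → T)) :=
      (centralizer_coordSub hs hna j _).mpr hyj
    have hfyc : f ((Pi.mulSingle j (x j))⁻¹ * x) (σ j) = 1 := by
      rw [← centralizer_coordSub hs hna (σ j)]
      rw [Subgroup.mem_centralizer_iff]
      intro c hc
      rw [← hσ j] at hc
      obtain ⟨c', hc', rfl⟩ := hc
      have hcomm := Subgroup.mem_centralizer_iff.mp hyc c' hc'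
      simp only [MulEquiv.coe_toMonoidHom]
      rw [← map_mul, ← map_mul, hcomm]
    calc f x (σ j)
        = (f (Pi.mulSingle j (x j)) * f ((Pi.mulSingle j (x j))⁻¹ * x)) (σ j) := by
          rw [← map_mul]
          congr 1
          group
      _ = f (Pi.mulSingle j (x j)) (σ j) := by rw [Pi.mul_apply, hfyc, mul_one]
  -- orbit equality
  have horb : ∀ j, Quotient.mk (MulAction.orbitRel (MulAut T) T) (f x (σ j))
      = Quotient.mk (MulAction.orbitRel (MulAut T) T) (x j) := by
    intro j
    set α : T →* T := (Pi.evalMonoidHom (fun _ : Fin n => T) (σ j)).comp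
      (f.toMonoidHom.comp (MonoidHom.mulSingle (fun _ : Fin n => T) j)) with hα
    have hαval : ∀ t : T, α t = f (Pi.mulSingle j t) (σ j) := fun t => rfl
    have hαinj : Function.Injective α := by
      intro a b hab
      have ha : f (Pi.mulSingle j a) ∈ coordSub T (σ j) := by
        rw [← hσ j]; exact ⟨_, mulSingle_mem_coordSub j a, rfl⟩
      have hb : f (Pi.mulSingle j b) ∈ coordSub T (σ j) := by
        rw [← hσ j]; exact ⟨_, mulSingle_mem_coordSub j b, rfl⟩
      have heq : f (Pi.mulSingle j a) = f (Pi.mulSingle j b) := by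
        rw [eq_mulSingle_of_mem ha, eq_mulSingle_of_mem hb]
        rw [hαval a, hαval b] at hab
        rw [hab]
      have := f.injective heq
      have := congrFun this j
      simpa [Pi.mulSingle_eq_same] using this
    have hαbij := Finite.injective_iff_bijective.mp hαinj
    have hfx : f x (σ j) = (MulEquiv.ofBijective α hαbij) (x j) := by
      rw [hcoord x j]; rfl
    rw [hfx]
    exact orb_mk_apply (MulEquiv.ofBijective α hαbij) (x j)
  -- assemble
  calc profile (f x)
      = (Finset.univ.val.map σe).map
          (fun m => Quotient.mk (MulAction.orbitRel (MulAut T) T) (f x m)) := by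
        rw [Multiset.map_univ_val_equiv]; rfl
    _ = Finset.univ.val.map
          (fun j => Quotient.mk (MulAction.orbitRel (MulAut T) T) (f x (σ j))) := by
        rw [Multiset.map_map]; rfl
    _ = profile x := Multiset.map_congr rfl fun j _ => horb j

/-- Every multiset of orbit classes of size `n` is the profile of some tuple. -/
lemma exists_profile_eq (m : Multiset (Quotient (MulAction.orbitRel (MulAut T) T)))
    (hm : Multiset.card m = n) : ∃ x : Fin n → T, profile x = m := by
  classical
  have hl : m.toList.length = n := by rw [Multiset.length_toList, hm]
  subst hl
  refine ⟨fun j => (m.toList.get j).out, ?_⟩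
  unfold profile
  have h1 : Finset.univ.val.map
        (fun j => Quotient.mk (MulAction.orbitRel (MulAut T) T) ((m.toList.get j).out))
      = Finset.univ.val.map (fun j => m.toList.get j) :=
    Multiset.map_congr rfl fun j _ => Quotient.out_eq _
  rw [h1, Fin.univ_val_map, List.ofFn_get]
  exact m.coe_toList

lemma card_sym_orbits (T : Type*) [Group T] [Finite T] (n : ℕ) :
    Nat.card (Sym (Quotient (MulAction.orbitRel (MulAut T) T)) n)
      = (n + Nat.card (Quotient (MulAction.orbitRel (MulAut T) T)) - 1).choose
          (Nat.card (Quotient (MulAction.orbitRel (MulAut T) T)) - 1) := by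
  classical
  haveI : Fintype T := Fintype.ofFinite T
  haveI : Fintype (Quotient (MulAction.orbitRel (MulAut T) T)) := Fintype.ofFinite _
  set Q := Quotient (MulAction.orbitRel (MulAut T) T)
  set k := Nat.card Q with hk
  haveI : Nonempty Q := ⟨Quotient.mk _ 1⟩
  have hk1 : 1 ≤ k := Nat.card_pos
  have hkf : k = Fintype.card Q := Nat.card_eq_fintype_card
  rw [Nat.card_eq_fintype_card, Sym.card_sym_eq_choose, ← hkf]
  have h2 : k + n - 1 = n + k - 1 := by omega
  rw [h2]
  have h3 := Nat.choose_symm (n := n + k - 1) (k := n) (by omega)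
  rw [show n + k - 1 - n = k - 1 by omega] at h3
  exact h3.symm

lemma conj_map_eq {G : Type*} [Group G] (H : Subgroup G) (hH : H.Normal) (g : G) :
    Subgroup.map (MulAut.conj g).toMonoidHom H = H := by
  apply le_antisymm
  · rintro x ⟨y, hy, rfl⟩
    simpa using hH.conj_mem y hy g
  · intro x hx
    refine ⟨g⁻¹ * x * g, by simpa using hH.conj_mem x hx g⁻¹, ?_⟩
    simp [MulAut.conj_apply]
    group

end PCAux

open PCAux

/-- Let `G` be a nontrivial finite group with trivial solvable radical, with distinct
minimal normal subgroups `M₁, …, M_r`, where `M i ≅ (T i)^(n i)` for nonabelian finite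
simple groups `T i`, and let `k i = k*(T i)`. Then
`∏ i, C(n i + k i - 1, k i - 1) ≤ k(G)`. -/
theorem prod_choose_le_numConjClasses
    (G : Type) [Group G] [Finite G] [Nontrivial G]
    (hrad : ∀ N : Subgroup G, N.Normal → IsSolvable N → N = ⊥)
    (r : ℕ) (M : Fin r → Subgroup G)
    (hmin : ∀ i, IsMinimalNormal (M i))
    (hinj : Function.Injective M)
    (hall : ∀ N : Subgroup G, IsMinimalNormal N → ∃ i, N = M i)
    (n : Fin r → ℕ) (T : Fin r → Type) [∀ i, Group (T i)] [∀ i, Finite (T i)]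
    (hsimple : ∀ i, IsSimpleGroup (T i))
    (hnonab : ∀ i, ¬ ∀ a b : T i, a * b = b * a)
    (hiso : ∀ i, Nonempty ((M i) ≃* (Fin (n i) → T i))) :
    ∏ i, Nat.choose (n i + numAutOrbits (T i) - 1) (numAutOrbits (T i) - 1) ≤
      numConjClasses G := by
  classical
  haveI hMnorm : ∀ i, (M i).Normal := fun i => (hmin i).2.1
  let e : ∀ i, (M i) ≃* (Fin (n i) → T i) := fun i => (hiso i).some
  -- distinct minimal normal subgroups intersect trivially
  have hdisj : ∀ i j, i ≠ j → M i ⊓ M j = ⊥ := by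
    intro i j hij
    by_contra h
    have hnormal : (M i ⊓ M j).Normal :=
      ⟨fun x hx g => ⟨(hMnorm i).conj_mem x hx.1 g, (hMnorm j).conj_mem x hx.2 g⟩⟩
    have h1 := (hmin i).2.2 _ hnormal inf_le_left h
    have h2 := (hmin j).2.2 _ hnormal inf_le_right h
    exact hij (hinj (h1.symm.trans h2))
  -- they pairwise commute
  have hcomm : Pairwise fun i j => ∀ x y : G, x ∈ M i → y ∈ M j → Commute x y := by
    intro i j hij
    intro x y hx hy
    have h1 : x * y * x⁻¹ * y⁻¹ ∈ M j := mul_mem ((hMnorm j).conj_mem y hy x) (inv_mem hy)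
    have h2 : x * y * x⁻¹ * y⁻¹ ∈ M i := by
      have hmem : y * x⁻¹ * y⁻¹ ∈ M i := (hMnorm i).conj_mem _ (inv_mem hx) y
      have := mul_mem hx hmem
      rwa [show x * (y * x⁻¹ * y⁻¹) = x * y * x⁻¹ * y⁻¹ by group] at this
    have h3 : x * y * x⁻¹ * y⁻¹ = 1 := by
      have : x * y * x⁻¹ * y⁻¹ ∈ M i ⊓ M j := ⟨h2, h1⟩
      rwa [hdisj i j hij, Subgroup.mem_bot] at this
    show x * y = y * x
    rw [mul_inv_eq_one, mul_inv_eq_iff_eq_mul] at h3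
    exact h3
  -- centralizing
  have hcent : ∀ i, (⨆ j, ⨆ _ : j ≠ i, M j) ≤ Subgroup.centralizer (M i : Set G) := by
    intro i
    refine iSup_le fun j => iSup_le fun hj y hy => ?_
    rw [Subgroup.mem_centralizer_iff]
    intro g hg
    exact ((hcomm hj) y g hy hg).eq.symm
  have hsupnormal : ∀ i, (⨆ j, ⨆ _ : j ≠ i, M j).Normal := by
    intro i
    constructor
    intro x hx g
    have hmapeq : Subgroup.map (MulAut.conj g).toMonoidHom (⨆ j, ⨆ _ : j ≠ i, M j)
        = (⨆ j, ⨆ _ : j ≠ i, M j) := by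
      rw [Subgroup.map_iSup]
      refine iSup_congr fun j => ?_
      rw [Subgroup.map_iSup]
      exact iSup_congr fun hj => conj_map_eq (M j) (hMnorm j) g
    rw [← hmapeq]
    exact ⟨x, hx, rfl⟩
  -- independence
  have hind : iSupIndep M := by
    intro i
    rw [disjoint_iff]
    apply hrad
    · exact ⟨fun x hx g => ⟨(hMnorm i).conj_mem x hx.1 g, (hsupnormal i).conj_mem x hx.2 g⟩⟩
    · apply isSolvable_of_comm
      intro a b
      apply Subtype.ext
      show (a : G) * b = (b : G) * a
      have hb : (b : G) ∈ Subgroup.centralizer (M i : Set G) := hcent i b.2.2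
      exact Subgroup.mem_centralizer_iff.mp hb a a.2.1
  let φhom := Subgroup.noncommPiCoprod hcomm
  have hφinj : Function.Injective φhom :=
    Subgroup.injective_noncommPiCoprod_of_iSupIndep hind
  -- lifts of multisets of orbit classes
  have hlift : ∀ i (s : Sym (Quotient (MulAction.orbitRel (MulAut (T i)) (T i))) (n i)),
      ∃ x : Fin (n i) → T i, profile x = s.1 := fun i s => exists_profile_eq s.1 s.2
  choose lift hliftp using hlift
  -- the injection
  let Φ : (∀ i, Sym (Quotient (MulAction.orbitRel (MulAut (T i)) (T i))) (n i)) → ConjClasses G :=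
    fun s => ConjClasses.mk (φhom fun i => (e i).symm (lift i (s i)))
  have hΦinj : Function.Injective Φ := by
    intro s s' h
    rw [ConjClasses.mk_eq_mk_iff_isConj, isConj_iff] at h
    obtain ⟨g, hg⟩ := h
    set m : ∀ i, M i := fun i => (e i).symm (lift i (s i)) with hm
    set m' : ∀ i, M i := fun i => (e i).symm (lift i (s' i)) with hm'
    have key : φhom (fun i => MulAut.conjNormal g (m i)) = g * φhom m * g⁻¹ := by
      have h2 : g * φhom m * g⁻¹ = (MulAut.conj g).toMonoidHom (φhom m) := by
        simp [MulAut.conj_apply]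
      rw [h2, Subgroup.noncommPiCoprod_apply, Subgroup.noncommPiCoprod_apply]
      refine Eq.trans ?_ (Finset.map_noncommProd _ _ _ _).symm
      exact Finset.noncommProd_congr rfl (fun i _ => by simp) _
    have hcomp : (fun i => MulAut.conjNormal g (m i)) = m' := hφinj (key.trans hg)
    funext i
    have hcompi : MulAut.conjNormal g (m i) = m' i := congrFun hcomp i
    let fi : (Fin (n i) → T i) ≃* (Fin (n i) → T i) :=
      ((e i).symm.trans (MulAut.conjNormal g : M i ≃* M i)).trans (e i)
    have hfi : fi (lift i (s i)) = lift i (s' i) := by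
      show (e i) (MulAut.conjNormal g ((e i).symm (lift i (s i)))) = lift i (s' i)
      rw [show (e i).symm (lift i (s i)) = m i from rfl, hcompi, hm']
      exact (e i).apply_symm_apply _
    have hprof : profile (fi (lift i (s i))) = profile (lift i (s i)) :=
      profile_mulEquiv (hsimple i) (hnonab i) fi _
    rw [hfi] at hprof
    apply Subtype.ext
    rw [← hliftp i (s i), ← hliftp i (s' i)]
    exact hprof.symm
  -- count
  have hle : Nat.card (∀ i, Sym (Quotient (MulAction.orbitRel (MulAut (T i)) (T i))) (n i))
      ≤ Nat.card (ConjClasses G) := Nat.card_le_card_of_injective Φ hΦinj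
  rw [Nat.card_pi] at hle
  refine le_trans (le_of_eq ?_) hle
  refine Finset.prod_congr rfl fun i _ => ?_
  rw [card_sym_orbits (T i) (n i)]
  rfl
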